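/- If a function F : [b,c] → ℝ is continuous on [b,c] and differentiable on (b,c) with F'(x) = f(x), then f is Henstock–Kurzweil integrable on [b,c] with integral F(c) − F(b). -/

import Mathlib

open Set Filter

/-- A tagged division of the compact interval `[a,b]`: partition points
`a = t 0 ≤ t 1 ≤ ⋯ ≤ t n = b` with a tag in each subinterval. -/
structure TaggedDiv1 (a b : ℝ) where
  n : ℕ
  t : Fin (n + 1) → ℝ
  tag : Fin n → ℝ
  mono : Monotone t
  first : t 0 = a
  last : t (Fin.last n) = b
  tag_mem : ∀ i : Fin n, tag i ∈ Set.Icc (t i.castSucc) (t i.succ)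

/-- A tagged division is compatible with the gauge `δ` if each subinterval lies in the
open interval of radius `δ` about its tag. -/
def Compat1 {a b : ℝ} (D : TaggedDiv1 a b) (δ : ℝ → ℝ) : Prop :=
  ∀ i : Fin D.n, Set.Icc (D.t i.castSucc) (D.t i.succ) ⊆
    Set.Ioo (D.tag i - δ (D.tag i)) (D.tag i + δ (D.tag i))

/-- The Riemann sum of `f` over a tagged division of `[a,b]`. -/
noncomputable def riemannSum1 {a b : ℝ} (f : ℝ → ℝ) (D : TaggedDiv1 a b) : ℝ :=
  ∑ i : Fin D.n, f (D.tag i) * (D.t i.succ - D.t i.castSucc)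

/-- `f` has Henstock–Kurzweil integral `A` on `[a,b]`. -/
def HasHK1 (f : ℝ → ℝ) (a b A : ℝ) : Prop :=
  ∀ ε > 0, ∃ δ : ℝ → ℝ, (∀ x ∈ Set.Icc a b, 0 < δ x) ∧
    ∀ D : TaggedDiv1 a b, Compat1 D δ → |riemannSum1 f D - A| < ε

lemma telescope_fin {n : ℕ} (g : Fin (n+1) → ℝ) :
    ∑ i : Fin n, (g i.succ - g i.castSucc) = g (Fin.last n) - g 0 := by
  induction n with
  | zero => simp
  | succ n ih =>
    rw [Fin.sum_univ_castSucc]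
    have h1 : ∀ i : Fin n, (g (i.castSucc).succ - g (i.castSucc).castSucc)
        = ((g ∘ Fin.castSucc) i.succ - (g ∘ Fin.castSucc) i.castSucc) := by
      intro i
      simp only [Function.comp_apply, Fin.succ_castSucc]
    rw [Finset.sum_congr rfl (fun i _ => h1 i), ih (g ∘ Fin.castSucc)]
    simp [Function.comp, Fin.succ_last]

/-- If `F` is continuous on `[b,c]` and `F' = f` on `(b,c)`, then `f` is
Henstock–Kurzweil integrable on `[b,c]` with integral `F c - F b`. -/
theorem ftc_hk (b c : ℝ) (hbc : b < c) (F f : ℝ → ℝ)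
    (hcont : ContinuousOn F (Set.Icc b c))
    (hderiv : ∀ x ∈ Set.Ioo b c, HasDerivAt F (f x) x) :
    HasHK1 f b c (F c - F b) := by
  intro ε hε
  have hcb : (0:ℝ) < c - b := sub_pos.2 hbc
  set ε1 := ε / (2 * (c - b)) with hε1def
  set ε2 := ε / 16 with hε2def
  have hε1 : 0 < ε1 := by positivity
  have hε2 : 0 < ε2 := by positivity
  have key : ∀ x : ℝ, ∃ d : ℝ, 0 < d ∧ (x ∈ Icc b c →
      ∀ u v : ℝ, b ≤ u → v ≤ c → u ≤ x → x ≤ v → x - d < u → v < x + d →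
        |f x * (v - u) - (F v - F u)| ≤ ε1 * (v - u) +
          (if (x = b ∨ x = c) ∧ u < v then 2 * ε2 else 0)) := by
    intro x
    by_cases hx : x ∈ Icc b c
    swap
    · exact ⟨1, one_pos, fun h => absurd h hx⟩
    rcases eq_or_lt_of_le hx.1 with rfl | hxb
    · -- x = b
      have hc := hcont b (left_mem_Icc.2 hbc.le)
      rw [Metric.continuousWithinAt_iff] at hc
      obtain ⟨d, hd, hcd⟩ := hc ε2 hε2
      have hfp : (0:ℝ) < |f b| + 1 := by positivity
      refine ⟨min d (ε2 / (|f b| + 1)), lt_min hd (by positivity), fun _ u v hbu hvc hux hxv hul hvu => ?_⟩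
      obtain rfl : u = b := le_antisymm hux hbu
      rcases eq_or_lt_of_le hxv with rfl | hv
      · simp
      · have hvI : v ∈ Icc u c := ⟨hxv, hvc⟩
        have hmin := lt_min_iff.1 (show v - u < min d (ε2 / (|f u| + 1)) by linarith)
        have hdist : dist v u < d := by
          rw [Real.dist_eq, abs_of_nonneg (sub_nonneg.2 hxv)]
          exact hmin.1
        have hF : |F v - F u| < ε2 := by
          have := hcd hvI hdist
          rwa [Real.dist_eq] at this
        have hsmall : |f u| * (v - u) ≤ ε2 := by
          calc |f u| * (v - u) ≤ (|f u| + 1) * (ε2 / (|f u| + 1)) := by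
                apply mul_le_mul (by linarith) (by linarith [hmin.2]) (by linarith) (by positivity)
            _ = ε2 := by field_simp
        have hind : (if (u = u ∨ u = c) ∧ u < v then 2 * ε2 else 0) = 2 * ε2 := by
          rw [if_pos ⟨Or.inl rfl, hv⟩]
        rw [hind]
        have habs : |f u * (v - u) - (F v - F u)| ≤ |f u| * (v - u) + |F v - F u| := by
          calc |f u * (v - u) - (F v - F u)| ≤ |f u * (v - u)| + |F v - F u| := abs_sub _ _
            _ = |f u| * (v - u) + |F v - F u| := by
                rw [abs_mul, abs_of_nonneg (sub_nonneg.2 hxv)]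
        nlinarith [mul_nonneg hε1.le (sub_nonneg.2 hxv)]
    rcases eq_or_lt_of_le hx.2 with rfl | hxc
    · -- x = c
      have hc := hcont x (right_mem_Icc.2 hbc.le)
      rw [Metric.continuousWithinAt_iff] at hc
      obtain ⟨d, hd, hcd⟩ := hc ε2 hε2
      have hfp : (0:ℝ) < |f x| + 1 := by positivity
      refine ⟨min d (ε2 / (|f x| + 1)), lt_min hd (by positivity), fun _ u v hbu hvc hux hxv hul hvu => ?_⟩
      obtain rfl : v = x := le_antisymm hvc hxv
      rcases eq_or_lt_of_le hux with rfl | hu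
      · simp
      · have hmin := lt_min_iff.1 (show v - u < min d (ε2 / (|f v| + 1)) by linarith)
        have hdist : dist u v < d := by
          rw [Real.dist_eq, abs_of_nonpos (sub_nonpos.2 hux)]
          linarith [hmin.1]
        have hF : |F u - F v| < ε2 := by
          have := hcd ⟨hbu, hux⟩ hdist
          rwa [Real.dist_eq] at this
        have hsmall : |f v| * (v - u) ≤ ε2 := by
          calc |f v| * (v - u) ≤ (|f v| + 1) * (ε2 / (|f v| + 1)) := by
                apply mul_le_mul (by linarith) (by linarith [hmin.2]) (by linarith) (by positivity)
            _ = ε2 := by field_simp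
        have hind : (if (v = b ∨ v = v) ∧ u < v then 2 * ε2 else 0) = 2 * ε2 := by
          rw [if_pos ⟨Or.inr rfl, hu⟩]
        rw [hind]
        have habs : |f v * (v - u) - (F v - F u)| ≤ |f v| * (v - u) + |F u - F v| := by
          calc |f v * (v - u) - (F v - F u)| ≤ |f v * (v - u)| + |F v - F u| := abs_sub _ _
            _ = |f v| * (v - u) + |F u - F v| := by
                rw [abs_mul, abs_of_nonneg (sub_nonneg.2 hux), abs_sub_comm]
        nlinarith [mul_nonneg hε1.le (sub_nonneg.2 hux)]
    · -- interior
      have hI : x ∈ Ioo b c := ⟨hxb, hxc⟩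
      have hd := hderiv x hI
      rw [hasDerivAt_iff_isLittleO] at hd
      have hb := hd.def hε1
      rw [Metric.eventually_nhds_iff] at hb
      obtain ⟨d, hdpos, hdb⟩ := hb
      refine ⟨d, hdpos, fun _ u v hbu hvc hux hxv hul hvu => ?_⟩
      have estu : |F u - F x - (u - x) * f x| ≤ ε1 * (x - u) := by
        have h := hdb (show dist u x < d by
          rw [Real.dist_eq, abs_of_nonpos (sub_nonpos.2 hux)]; linarith)
        simp only [Real.norm_eq_abs, smul_eq_mul] at h
        rwa [abs_of_nonpos (sub_nonpos.2 hux), neg_sub] at h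
      have estv : |F v - F x - (v - x) * f x| ≤ ε1 * (v - x) := by
        have h := hdb (show dist v x < d by
          rw [Real.dist_eq, abs_of_nonneg (sub_nonneg.2 hxv)]; linarith)
        simp only [Real.norm_eq_abs, smul_eq_mul] at h
        rwa [abs_of_nonneg (sub_nonneg.2 hxv)] at h
      have hkey : f x * (v - u) - (F v - F u)
          = (F u - F x - (u - x) * f x) - (F v - F x - (v - x) * f x) := by ring
      have hle : |f x * (v - u) - (F v - F u)| ≤ ε1 * (v - u) := by
        rw [hkey]
        calc |(F u - F x - (u - x) * f x) - (F v - F x - (v - x) * f x)|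
            ≤ |F u - F x - (u - x) * f x| + |F v - F x - (v - x) * f x| := abs_sub _ _
          _ ≤ ε1 * (x - u) + ε1 * (v - x) := add_le_add estu estv
          _ = ε1 * (v - u) := by ring
      have : (0:ℝ) ≤ if (x = b ∨ x = c) ∧ u < v then 2 * ε2 else 0 := by
        split <;> positivity
      linarith
  choose δ hδpos hδ using key
  refine ⟨δ, fun x _ => hδpos x, ?_⟩
  intro D hD
  have hmem : ∀ i : Fin (D.n + 1), D.t i ∈ Icc b c := by
    intro i
    constructor
    · calc b = D.t 0 := D.first.symm
        _ ≤ D.t i := D.mono (Fin.zero_le i)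
    · calc D.t i ≤ D.t (Fin.last D.n) := D.mono (Fin.le_last i)
        _ = c := D.last
  have htagmem : ∀ i : Fin D.n, D.tag i ∈ Icc b c := fun i =>
    ⟨le_trans (hmem i.castSucc).1 (D.tag_mem i).1, le_trans (D.tag_mem i).2 (hmem i.succ).2⟩
  have hle : ∀ i : Fin D.n, D.t i.castSucc ≤ D.t i.succ := fun i =>
    D.mono (le_of_lt (Fin.castSucc_lt_succ : i.castSucc < i.succ))
  have hterm : ∀ i : Fin D.n,
      |f (D.tag i) * (D.t i.succ - D.t i.castSucc) - (F (D.t i.succ) - F (D.t i.castSucc))|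
        ≤ ε1 * (D.t i.succ - D.t i.castSucc) +
          ((if D.tag i = b ∧ D.t i.castSucc < D.t i.succ then 2*ε2 else 0)
           + (if D.tag i = c ∧ D.t i.castSucc < D.t i.succ then 2*ε2 else 0)) := by
    intro i
    have hcomp := hD i
    have hu : D.t i.castSucc ∈ Icc (D.t i.castSucc) (D.t i.succ) := ⟨le_refl _, hle i⟩
    have hv : D.t i.succ ∈ Icc (D.t i.castSucc) (D.t i.succ) := ⟨hle i, le_refl _⟩
    have h1 := hcomp hu
    have h2 := hcomp hv
    have hest := hδ (D.tag i) (htagmem i) (D.t i.castSucc) (D.t i.succ)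
      (hmem i.castSucc).1 (hmem i.succ).2 (D.tag_mem i).1 (D.tag_mem i).2
      (by linarith [h1.1]) (by linarith [h2.2])
    refine le_trans hest ?_
    apply add_le_add (le_refl _)
    have hb0 : (0:ℝ) ≤ if D.tag i = b ∧ D.t i.castSucc < D.t i.succ then 2*ε2 else 0 := by
      split <;> positivity
    have hc0 : (0:ℝ) ≤ if D.tag i = c ∧ D.t i.castSucc < D.t i.succ then 2*ε2 else 0 := by
      split <;> positivity
    split
    · rename_i h
      rcases h.1 with h' | h'
      · rw [if_pos (show D.tag i = b ∧ D.t i.castSucc < D.t i.succ from ⟨h', h.2⟩)]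
        linarith
      · rw [if_pos (show D.tag i = c ∧ D.t i.castSucc < D.t i.succ from ⟨h', h.2⟩)]
        linarith
    · positivity
  -- cardinality bounds
  have cardb : (Finset.univ.filter
      (fun i : Fin D.n => D.tag i = b ∧ D.t i.castSucc < D.t i.succ)).card ≤ 1 := by
    rw [Finset.card_le_one]
    intro i hi j hj
    simp only [Finset.mem_filter] at hi hj
    by_contra hne
    have haux : ∀ i j : Fin D.n, i < j →
        (D.tag i = b ∧ D.t i.castSucc < D.t i.succ) →
        (D.tag j = b ∧ D.t j.castSucc < D.t j.succ) → False := by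
      intro i j hij hi hj
      have h1 : D.t i.succ ≤ D.t j.castSucc := D.mono (Fin.succ_le_castSucc_iff.2 hij)
      have h2 : D.t j.castSucc ≤ D.tag j := (D.tag_mem j).1
      have h3 : b ≤ D.t i.castSucc := (hmem i.castSucc).1
      rw [hj.1] at h2
      linarith [hi.2]
    rcases lt_trichotomy i j with h | h | h
    · exact haux i j h hi.2 hj.2
    · exact hne h
    · exact haux j i h hj.2 hi.2
  have cardc : (Finset.univ.filter
      (fun i : Fin D.n => D.tag i = c ∧ D.t i.castSucc < D.t i.succ)).card ≤ 1 := by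
    rw [Finset.card_le_one]
    intro i hi j hj
    simp only [Finset.mem_filter] at hi hj
    by_contra hne
    have haux : ∀ i j : Fin D.n, i < j →
        (D.tag i = c ∧ D.t i.castSucc < D.t i.succ) →
        (D.tag j = c ∧ D.t j.castSucc < D.t j.succ) → False := by
      intro i j hij hi hj
      have h1 : D.t i.succ ≤ D.t j.castSucc := D.mono (Fin.succ_le_castSucc_iff.2 hij)
      have h2 : D.tag i ≤ D.t i.succ := (D.tag_mem i).2
      have h3 : D.t j.succ ≤ c := (hmem j.succ).2
      rw [hi.1] at h2
      linarith [hj.2]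
    rcases lt_trichotomy i j with h | h | h
    · exact haux i j h hi.2 hj.2
    · exact hne h
    · exact haux j i h hj.2 hi.2
  have hsumb : ∑ i : Fin D.n,
      (if D.tag i = b ∧ D.t i.castSucc < D.t i.succ then 2*ε2 else 0) ≤ 2*ε2 := by
    classical
    rw [Finset.sum_ite, Finset.sum_const, Finset.sum_const_zero, add_zero, nsmul_eq_mul]
    calc ((Finset.univ.filter _).card : ℝ) * (2*ε2) ≤ 1 * (2*ε2) := by
          apply mul_le_mul_of_nonneg_right _ (by positivity)
          exact_mod_cast cardb
      _ = 2*ε2 := one_mul _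
  have hsumc : ∑ i : Fin D.n,
      (if D.tag i = c ∧ D.t i.castSucc < D.t i.succ then 2*ε2 else 0) ≤ 2*ε2 := by
    classical
    rw [Finset.sum_ite, Finset.sum_const, Finset.sum_const_zero, add_zero, nsmul_eq_mul]
    calc ((Finset.univ.filter _).card : ℝ) * (2*ε2) ≤ 1 * (2*ε2) := by
          apply mul_le_mul_of_nonneg_right _ (by positivity)
          exact_mod_cast cardc
      _ = 2*ε2 := one_mul _
  have htel : ∑ i : Fin D.n, (F (D.t i.succ) - F (D.t i.castSucc)) = F c - F b := by
    have h := telescope_fin (fun j => F (D.t j))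
    simpa [D.first, D.last] using h
  have htel2 : ∑ i : Fin D.n, (D.t i.succ - D.t i.castSucc) = c - b := by
    have h := telescope_fin D.t
    simpa [D.first, D.last] using h
  have hsplit : riemannSum1 f D - (F c - F b)
      = ∑ i : Fin D.n, (f (D.tag i) * (D.t i.succ - D.t i.castSucc)
          - (F (D.t i.succ) - F (D.t i.castSucc))) := by
    rw [riemannSum1, ← htel, ← Finset.sum_sub_distrib]
  calc |riemannSum1 f D - (F c - F b)|
      = |∑ i : Fin D.n, (f (D.tag i) * (D.t i.succ - D.t i.castSucc)
          - (F (D.t i.succ) - F (D.t i.castSucc)))| := by rw [hsplit]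
    _ ≤ ∑ i : Fin D.n, |f (D.tag i) * (D.t i.succ - D.t i.castSucc)
          - (F (D.t i.succ) - F (D.t i.castSucc))| := Finset.abs_sum_le_sum_abs _ _
    _ ≤ ∑ i : Fin D.n, (ε1 * (D.t i.succ - D.t i.castSucc) +
          ((if D.tag i = b ∧ D.t i.castSucc < D.t i.succ then 2*ε2 else 0)
           + (if D.tag i = c ∧ D.t i.castSucc < D.t i.succ then 2*ε2 else 0))) :=
        Finset.sum_le_sum (fun i _ => hterm i)
    _ = ε1 * (c - b) + (∑ i : Fin D.n,
          (if D.tag i = b ∧ D.t i.castSucc < D.t i.succ then 2*ε2 else 0)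
        + ∑ i : Fin D.n,
          (if D.tag i = c ∧ D.t i.castSucc < D.t i.succ then 2*ε2 else 0)) := by
        rw [Finset.sum_add_distrib, Finset.sum_add_distrib, ← Finset.mul_sum, htel2]
    _ ≤ ε1 * (c - b) + (2*ε2 + 2*ε2) := by
        exact add_le_add (le_refl _) (add_le_add hsumb hsumc)
    _ < ε := by
        have h1 : ε1 * (c - b) = ε / 2 := by
          rw [hε1def]; field_simp
        rw [h1, hε2def]; linarith
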